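/- Let A ∈ sp(V, Ω) satisfy A² = +I, with V₊ = ker(A − I), V₋ = ker(A + I), projection P₊: V → V₊ along V₋ and P₋ = I − P₊. If g: V → V is a smooth diffeomorphism satisfying Ω(g(z) − A(g(z)), Dg_z(v)) = Ω(z − Az, v) for all z, v ∈ V, and f := g|_{V₊} : V₊ → V₊ denotes its restriction (which is a diffeomorphism of V₊), then g is recovered from f by the formula g(z) = f(z₊) + [((Df_{z₊} ∘ P₊)†)|_{V₋}]⁻¹(z₋), where z₊ = P₊(z), z₋ = P₋(z), and † denotes the symplectic adjoint. -/

import Mathlib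

set_option maxHeartbeats 1000000


/-- The linear map `F_z = Df_{z₊} ∘ P₊ : V → V`, where `f : V₊ → V₊`, `P₊` is the
projection of `V` onto `V₊` and `z₊ = P₊(z)`. -/
noncomputable def Fmap {V : Type*} [NormedAddCommGroup V] [NormedSpace ℝ V]
    (Vp : Submodule ℝ V) (P : V →ₗ[ℝ] V) (hPr : ∀ z : V, P z ∈ Vp)
    (f : Vp → Vp) (z : V) : V →ₗ[ℝ] V :=
  Vp.subtype ∘ₗ (fderiv ℝ f ⟨P z, hPr z⟩).toLinearMap ∘ₗ P.codRestrict Vp hPr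

/-- Let `A ∈ sp(V, Ω)` satisfy `A² = +I`, with `V₊ = ker(A − I)`,
`V₋ = ker(A + I)`, projection `P₊` onto `V₊` along `V₋` and `P₋ = I − P₊`. If the
smooth diffeomorphism `g` preserves `θ^A` and `f := g|_{V₊} : V₊ → V₊` denotes its
restriction, then `g` is recovered from `f` by the formula
`g(z) = f(z₊) + [((Df_{z₊} ∘ P₊)†)|_{V₋}]⁻¹(z₋)`; equivalently, `g(z) − f(z₊)` lies in
`V₋` and is carried by the symplectic adjoint `(Df_{z₊} ∘ P₊)†` (a linear automorphism
of `V₋`) to `z₋ = z − P₊(z)`. -/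
theorem stmt_15 {V : Type*} [NormedAddCommGroup V] [NormedSpace ℝ V] [FiniteDimensional ℝ V]
    (Ω : V →ₗ[ℝ] V →ₗ[ℝ] ℝ)
    (hΩalt : ∀ x : V, Ω x x = 0)
    (hΩnd : ∀ x : V, (∀ y : V, Ω x y = 0) → x = 0)
    (A : V →ₗ[ℝ] V) (hA : ∀ x y : V, Ω (A x) y + Ω x (A y) = 0)
    (hA2 : A ∘ₗ A = LinearMap.id)
    (P : V →ₗ[ℝ] V) (hPr : ∀ z : V, P z ∈ LinearMap.ker (A - LinearMap.id))
    (hPp : ∀ x ∈ LinearMap.ker (A - LinearMap.id), P x = x)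
    (hPm : ∀ x ∈ LinearMap.ker (A + LinearMap.id), P x = 0)
    (g ginv : V → V) (hg : ContDiff ℝ (⊤ : ℕ∞) g) (hginv : ContDiff ℝ (⊤ : ℕ∞) ginv)
    (hli : Function.LeftInverse ginv g) (hri : Function.RightInverse ginv g)
    (hpres : ∀ z v : V, Ω (g z - A (g z)) (fderiv ℝ g z v) = Ω (z - A z) v)
    (f : LinearMap.ker (A - LinearMap.id) → LinearMap.ker (A - LinearMap.id))
    (hfg : ∀ x : LinearMap.ker (A - LinearMap.id), (f x : V) = g x) :
    ∀ z : V,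
      g z - (f ⟨P z, hPr z⟩ : V) ∈ LinearMap.ker (A + LinearMap.id) ∧
      ∀ Fdag : V →ₗ[ℝ] V,
        (∀ x y : V, Ω (Fdag x) y = Ω x (Fmap (LinearMap.ker (A - LinearMap.id)) P hPr f z y)) →
        Fdag (g z - (f ⟨P z, hPr z⟩ : V)) = z - P z := by
  classical
  -- smoothness basics
  have hgd : Differentiable ℝ g := hg.differentiable (by simp)
  have hginvd : Differentiable ℝ ginv := hginv.differentiable (by simp)
  have hfd : ∀ p, HasFDerivAt g (fderiv ℝ g p) p := fun p => (hgd p).hasFDerivAt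
  have hDg : ContDiff ℝ (⊤ : ℕ∞) (fderiv ℝ g) := hg.fderiv_right (by exact_mod_cast le_top)
  have hD2d : Differentiable ℝ (fderiv ℝ g) := hDg.differentiable (by simp)
  have hD2c : Continuous (fderiv ℝ (fderiv ℝ g)) := (hDg.fderiv_right (m := (⊤ : ℕ∞)) (by exact_mod_cast le_top)).continuous
  have hsymm : ∀ p u v, fderiv ℝ (fderiv ℝ g) p u v = fderiv ℝ (fderiv ℝ g) p v u :=
    fun p => second_derivative_symmetric hfd (hD2d p).hasFDerivAt
  -- continuous linear versions
  set Pc : V →L[ℝ] V := LinearMap.toContinuousLinearMap P with hPcdef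
  have hPc : ∀ x, Pc x = P x := fun x => rfl
  set Ωc : V →L[ℝ] (V →L[ℝ] ℝ) := LinearMap.toContinuousLinearMap
    (((LinearMap.toContinuousLinearMap :
        (V →ₗ[ℝ] ℝ) ≃ₗ[ℝ] (V →L[ℝ] ℝ)) : (V →ₗ[ℝ] ℝ) →ₗ[ℝ] (V →L[ℝ] ℝ)) ∘ₗ Ω) with hΩcdef
  have hΩc : ∀ x y, Ωc x y = Ω x y := fun x y => rfl
  -- pointwise A² = I
  have hA2' : ∀ x, A (A x) = x := fun x => by
    have := LinearMap.ext_iff.mp hA2 x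
    simpa using this
  -- algebra of P
  have hPP : ∀ x, P (P x) = P x := fun x => hPp _ (hPr x)
  have hPz0 : ∀ x, P (x - P x) = 0 := fun x => by rw [map_sub, hPP, sub_self]
  have hAP : ∀ x, A x = P x + P x - x := by
    intro x
    have h1 : P (x + A x) = x + A x := hPp _ (by
      rw [LinearMap.mem_ker, LinearMap.sub_apply, LinearMap.id_apply, map_add, hA2' x]; abel)
    have h2 : P (x - A x) = 0 := hPm _ (by
      rw [LinearMap.mem_ker, LinearMap.add_apply, LinearMap.id_apply, map_sub, hA2' x]; abel)
    have h3 : P (x + x) = P ((x + A x) + (x - A x)) := by congr 1; abel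
    rw [map_add, map_add, h1, h2, add_zero] at h3
    rw [h3]; abel
  have hΩanti : ∀ x y, Ω x y = -Ω y x := by
    intro x y
    have h := hΩalt (x + y)
    simp only [map_add, LinearMap.add_apply] at h
    linarith [hΩalt x, hΩalt y]
  have hPpair : ∀ x y, Ω (P x) y + Ω x (P y) = Ω x y := by
    intro x y
    have h := hA x y
    rw [hAP x, hAP y] at h
    simp only [map_add, map_sub, LinearMap.add_apply, LinearMap.sub_apply] at h
    linarith
  have hMinusIso : ∀ a b, P a = 0 → P b = 0 → Ω a b = 0 := by
    intro a b ha hb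
    have h := hPpair a b
    rw [ha, hb] at h
    simpa using h.symm
  have hpairP : ∀ w x, P w = 0 → Ω w x = Ω w (P x) := by
    intro w x hw
    have h := hMinusIso w (x - P x) hw (hPz0 x)
    rw [map_sub] at h
    linarith
  -- derivative of g is surjective
  have hcomp : ∀ q, (fderiv ℝ g (ginv q)).comp (fderiv ℝ ginv q) = ContinuousLinearMap.id ℝ V := by
    intro q
    have h1 : HasFDerivAt (g ∘ ginv) ((fderiv ℝ g (ginv q)).comp (fderiv ℝ ginv q)) q :=
      (hfd _).comp q (hginvd q).hasFDerivAt
    have h2 : (g ∘ ginv) = id := funext hri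
    rw [h2] at h1
    exact h1.unique (hasFDerivAt_id q)
  have Dgsurj : ∀ p w, ∃ v, fderiv ℝ g p v = w := by
    intro p w
    refine ⟨fderiv ℝ ginv (g p) w, ?_⟩
    have h := hcomp (g p)
    rw [hli p] at h
    simpa using ContinuousLinearMap.ext_iff.mp h w
  -- E1 : the θ-preservation in terms of P
  have E1 : ∀ p v, Ω (g p - P (g p)) (fderiv ℝ g p v) = Ω (p - P p) v := by
    intro p v
    have h := hpres p v
    rw [hAP (g p), hAP p] at h
    simp only [map_sub, map_add, LinearMap.sub_apply, LinearMap.add_apply] at h ⊢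
    linarith
  -- symplecticity of Dg
  have S : ∀ p u v, Ω (fderiv ℝ g p u - P (fderiv ℝ g p u)) (fderiv ℝ g p v)
      + Ω (g p - P (g p)) (fderiv ℝ (fderiv ℝ g) p u v) = Ω (u - P u) v := by
    intro p u v
    have ha : HasFDerivAt (fun q => g q - P (g q))
        (fderiv ℝ g p - Pc.comp (fderiv ℝ g p)) p :=
      (hfd p).sub (Pc.hasFDerivAt.comp p (hfd p))
    have hb : HasFDerivAt (fun q => fderiv ℝ g q v)
        ((fderiv ℝ g p).comp (0 : V →L[ℝ] V) + (fderiv ℝ (fderiv ℝ g) p).flip v) p :=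
      (hD2d p).hasFDerivAt.clm_apply (hasFDerivAt_const v p)
    have hc : HasFDerivAt (fun q => Ωc (g q - P (g q)))
        (Ωc.comp (fderiv ℝ g p - Pc.comp (fderiv ℝ g p))) p := Ωc.hasFDerivAt.comp p ha
    have hL : HasFDerivAt (fun q => Ωc (g q - P (g q)) (fderiv ℝ g q v))
        ((Ωc (g p - P (g p))).comp
            ((fderiv ℝ g p).comp (0 : V →L[ℝ] V) + (fderiv ℝ (fderiv ℝ g) p).flip v)
          + (Ωc.comp (fderiv ℝ g p - Pc.comp (fderiv ℝ g p))).flip (fderiv ℝ g p v)) p :=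
      hc.clm_apply hb
    have heq : (fun q => Ωc (g q - P (g q)) (fderiv ℝ g q v))
        = (fun q => Ωc (q - P q) v) := by
      funext q
      rw [hΩc, hΩc]; exact E1 q v
    have hR : HasFDerivAt (fun q => Ωc (g q - P (g q)) (fderiv ℝ g q v))
        ((Ωc.flip v).comp (ContinuousLinearMap.id ℝ V - Pc)) p := by
      rw [heq]
      exact (Ωc.flip v).hasFDerivAt.comp p ((hasFDerivAt_id p).sub Pc.hasFDerivAt)
    have huniq := hL.unique hR
    have happ := ContinuousLinearMap.ext_iff.mp huniq u
    simp only [ContinuousLinearMap.add_apply, ContinuousLinearMap.comp_apply,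
      ContinuousLinearMap.flip_apply, ContinuousLinearMap.zero_apply, map_zero,
      ContinuousLinearMap.sub_apply, ContinuousLinearMap.id_apply, zero_add] at happ
    simp only [hΩc, hPc] at happ
    linarith
  have sympl : ∀ p u v, Ω (fderiv ℝ g p u) (fderiv ℝ g p v) = Ω u v := by
    intro p u v
    have h1 := S p u v
    have h2 := S p v u
    rw [hsymm p v u] at h2
    simp only [map_sub, LinearMap.sub_apply] at h1 h2
    have e1 := hPpair (fderiv ℝ g p u) (fderiv ℝ g p v)
    have e2 := hPpair u v
    have a1 := hΩanti (fderiv ℝ g p u) (fderiv ℝ g p v)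
    have a2 := hΩanti (fderiv ℝ g p u) (P (fderiv ℝ g p v))
    have a3 := hΩanti u v
    have a4 := hΩanti u (P v)
    linarith
  -- E2
  have E2 : ∀ p, g p - P (g p) = fderiv ℝ g p (p - P p) := by
    intro p
    have key : ∀ y, Ω (g p - P (g p) - fderiv ℝ g p (p - P p)) y = 0 := by
      intro y
      obtain ⟨v, hv⟩ := Dgsurj p y
      rw [← hv]
      have h1 := E1 p v
      have h2 := sympl p (p - P p) v
      simp only [map_sub, LinearMap.sub_apply] at h1 h2 ⊢
      linarith
    have h := hΩnd _ key
    rw [sub_eq_zero] at h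
    exact h
  -- the main argument, for a fixed z
  intro z
  set zm : V := z - P z with hzm
  set c : ℝ → V := fun t => P z + t • zm with hcdef
  have hc0 : c 0 = P z := by simp [hcdef]
  have hc1 : c 1 = z := by simp [hcdef, hzm]
  have hccont : Continuous c := by
    apply continuous_const.add
    exact continuous_id.smul continuous_const
  have hPct : ∀ t, P (c t) = P z := by
    intro t
    simp [hcdef, map_add, map_smul, hzm, hPP, hPz0 z]
  have hcm : ∀ t, c t - P (c t) = t • zm := by
    intro t
    rw [hPct t]; simp [hcdef]
  have hcd : ∀ t : ℝ, HasDerivAt c zm t := by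
    intro t
    have h1 : HasDerivAt (fun s : ℝ => s • zm) ((1 : ℝ) • zm) t :=
      (hasDerivAt_id t).smul_const zm
    simpa [hcdef] using h1.const_add (P z)
  -- E2 along the curve c
  have E2c : ∀ t : ℝ, g (c t) - P (g (c t)) = t • fderiv ℝ g (c t) zm := by
    intro t
    rw [E2 (c t), hcm t, map_smul]
  -- g of P z is f of P z and lies in V₊
  have hgPz : g (P z) = (f ⟨P z, hPr z⟩ : V) := (hfg ⟨P z, hPr z⟩).symm
  have hPgPz : P (g (P z)) = g (P z) := by
    rw [hgPz]; exact hPp _ (f ⟨P z, hPr z⟩).2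
  -- step 1 : P (g z) = g (P z)
  have hψ0 : ∀ t : ℝ, P (fderiv ℝ g (c t) zm) = 0 := by
    have hcont : Continuous fun t : ℝ => P (fderiv ℝ g (c t) zm) := by
      have h1 : Continuous fun t : ℝ => fderiv ℝ g (c t) zm :=
        (ContinuousLinearMap.apply ℝ V zm).continuous.comp (hDg.continuous.comp hccont)
      exact Pc.continuous.comp h1
    have hne : ∀ t : ℝ, t ≠ 0 → P (fderiv ℝ g (c t) zm) = 0 := by
      intro t ht
      have h2 : P (g (c t) - P (g (c t))) = 0 := hPz0 (g (c t))
      rw [E2c t, map_smul, smul_eq_zero] at h2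
      exact h2.resolve_left ht
    have hdense : Dense ({(0 : ℝ)}ᶜ : Set ℝ) := dense_compl_singleton 0
    have hext := Continuous.ext_on hdense hcont continuous_const
      (fun t (ht : t ∈ ({(0:ℝ)}ᶜ : Set ℝ)) => hne t ht)
    exact fun t => congrFun hext t
  have step1 : P (g z) = g (P z) := by
    have hφd : ∀ t : ℝ, HasDerivAt (fun t => P (g (c t))) (P (fderiv ℝ g (c t) zm)) t := by
      intro t
      have h1 : HasDerivAt (fun t => g (c t)) (fderiv ℝ g (c t) zm) t :=
        (hfd (c t)).comp_hasDerivAt t (hcd t)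
      exact Pc.hasFDerivAt.comp_hasDerivAt t h1
    have hdiff : Differentiable ℝ (fun t : ℝ => P (g (c t))) :=
      fun t => (hφd t).differentiableAt
    have hzero : ∀ t : ℝ, fderiv ℝ (fun t : ℝ => P (g (c t))) t = 0 := by
      intro t
      have h := hφd t
      rw [hψ0 t] at h
      have h2 := h.hasFDerivAt.fderiv
      rw [h2]
      ext
      simp
    have hconst := is_const_of_fderiv_eq_zero (𝕜 := ℝ) hdiff hzero 1 0
    simp only [hc1, hc0] at hconst
    rw [hconst, hPgPz]
  -- key2 : differentiating E2 in a V₊ direction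
  have key2 : ∀ t : ℝ, ∀ u, P u = u →
      t • (fderiv ℝ (fderiv ℝ g) (c t) u zm)
        = fderiv ℝ g (c t) u - P (fderiv ℝ g (c t) u) := by
    intro t u hu
    have hρ1 : HasFDerivAt (fun q => fderiv ℝ g q (q - P q))
        ((fderiv ℝ g (c t)).comp (ContinuousLinearMap.id ℝ V - Pc)
          + (fderiv ℝ (fderiv ℝ g) (c t)).flip (c t - P (c t))) (c t) :=
      (hD2d (c t)).hasFDerivAt.clm_apply ((hasFDerivAt_id (c t)).sub Pc.hasFDerivAt)
    have hρ2 : HasFDerivAt (fun q => fderiv ℝ g q (q - P q))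
        (fderiv ℝ g (c t) - Pc.comp (fderiv ℝ g (c t))) (c t) := by
      have heq : (fun q => fderiv ℝ g q (q - P q)) = (fun q => g q - P (g q)) :=
        funext fun q => (E2 q).symm
      rw [heq]
      exact (hfd (c t)).sub (Pc.hasFDerivAt.comp (c t) (hfd (c t)))
    have huniq := hρ1.unique hρ2
    have happ := ContinuousLinearMap.ext_iff.mp huniq u
    simp only [ContinuousLinearMap.add_apply, ContinuousLinearMap.comp_apply,
      ContinuousLinearMap.flip_apply, ContinuousLinearMap.sub_apply,
      ContinuousLinearMap.id_apply] at happ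
    simp only [hPc] at happ
    rw [hu, sub_self, map_zero, zero_add, hcm t, map_smul] at happ
    exact happ
  -- step 2 : P ∘ Dg in a V₊ direction agrees at z and at P z
  have hχ0 : ∀ u, P u = u → ∀ t : ℝ, P (fderiv ℝ (fderiv ℝ g) (c t) zm u) = 0 := by
    intro u hu
    have hcont : Continuous fun t : ℝ => P (fderiv ℝ (fderiv ℝ g) (c t) zm u) := by
      have h1 : Continuous fun t : ℝ => fderiv ℝ (fderiv ℝ g) (c t) zm u :=
        (ContinuousLinearMap.apply ℝ V u).continuous.comp
          ((ContinuousLinearMap.apply ℝ (V →L[ℝ] V) zm).continuous.comp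
            (hD2c.comp hccont))
      exact Pc.continuous.comp h1
    have hne : ∀ t : ℝ, t ≠ 0 → P (fderiv ℝ (fderiv ℝ g) (c t) zm u) = 0 := by
      intro t ht
      have h := key2 t u hu
      have h2 : P (t • (fderiv ℝ (fderiv ℝ g) (c t) u zm)) = 0 := by
        rw [h, map_sub, hPP, sub_self]
      rw [map_smul, smul_eq_zero] at h2
      rw [hsymm (c t) zm u]
      exact h2.resolve_left ht
    have hdense : Dense ({(0 : ℝ)}ᶜ : Set ℝ) := dense_compl_singleton 0
    have hext := Continuous.ext_on hdense hcont continuous_const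
      (fun t (ht : t ∈ ({(0:ℝ)}ᶜ : Set ℝ)) => hne t ht)
    exact fun t => congrFun hext t
  have step2 : ∀ u, P u = u → P (fderiv ℝ g z u) = P (fderiv ℝ g (P z) u) := by
    intro u hu
    have hχd : ∀ t : ℝ, HasDerivAt (fun t => P (fderiv ℝ g (c t) u))
        (P (fderiv ℝ (fderiv ℝ g) (c t) zm u)) t := by
      intro t
      have h1 : HasDerivAt (fun t => fderiv ℝ g (c t)) (fderiv ℝ (fderiv ℝ g) (c t) zm) t :=
        (hD2d (c t)).hasFDerivAt.comp_hasDerivAt t (hcd t)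
      have h2 : HasDerivAt (fun t => fderiv ℝ g (c t) u)
          (fderiv ℝ (fderiv ℝ g) (c t) zm u) t := by
        have h3 := h1.clm_apply (hasDerivAt_const t u)
        simpa using h3
      exact Pc.hasFDerivAt.comp_hasDerivAt t h2
    have hdiff : Differentiable ℝ (fun t : ℝ => P (fderiv ℝ g (c t) u)) :=
      fun t => (hχd t).differentiableAt
    have hzero : ∀ t : ℝ, fderiv ℝ (fun t : ℝ => P (fderiv ℝ g (c t) u)) t = 0 := by
      intro t
      have h := hχd t
      rw [hχ0 u hu t] at h
      have h2 := h.hasFDerivAt.fderiv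
      rw [h2]
      ext
      simp
    have hconst := is_const_of_fderiv_eq_zero (𝕜 := ℝ) hdiff hzero 1 0
    simpa only [hc1, hc0] using hconst
  -- the Fmap computation
  have hfdef : ∀ x : LinearMap.ker (A - LinearMap.id),
      f x = LinearMap.toContinuousLinearMap
          (P.codRestrict (LinearMap.ker (A - LinearMap.id)) hPr)
          (g ((LinearMap.ker (A - LinearMap.id)).subtypeL x)) := by
    intro x
    apply Subtype.ext
    show (f x : V) = P (g x)
    rw [hfg x]
    have h : P (g (x : V)) = g (x : V) := by rw [← hfg x]; exact hPp _ (f x).2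
    exact h.symm
  have hfder : fderiv ℝ f (⟨P z, hPr z⟩ : LinearMap.ker (A - LinearMap.id))
      = ((LinearMap.toContinuousLinearMap
            (P.codRestrict (LinearMap.ker (A - LinearMap.id)) hPr)).comp
          ((fderiv ℝ g (P z)).comp
            (LinearMap.ker (A - LinearMap.id)).subtypeL)) := by
    have hF : HasFDerivAt f
        (((LinearMap.toContinuousLinearMap
            (P.codRestrict (LinearMap.ker (A - LinearMap.id)) hPr)).comp
          ((fderiv ℝ g (P z)).comp
            (LinearMap.ker (A - LinearMap.id)).subtypeL)))
        (⟨P z, hPr z⟩ : LinearMap.ker (A - LinearMap.id)) := by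
      have h1 : HasFDerivAt (fun x : LinearMap.ker (A - LinearMap.id) =>
          LinearMap.toContinuousLinearMap
            (P.codRestrict (LinearMap.ker (A - LinearMap.id)) hPr)
            (g ((LinearMap.ker (A - LinearMap.id)).subtypeL x)))
          (((LinearMap.toContinuousLinearMap
              (P.codRestrict (LinearMap.ker (A - LinearMap.id)) hPr)).comp
            ((fderiv ℝ g (P z)).comp
              (LinearMap.ker (A - LinearMap.id)).subtypeL)))
          (⟨P z, hPr z⟩ : LinearMap.ker (A - LinearMap.id)) :=
        (LinearMap.toContinuousLinearMap
            (P.codRestrict (LinearMap.ker (A - LinearMap.id)) hPr)).hasFDerivAt.comp (⟨P z, hPr z⟩ : LinearMap.ker (A - LinearMap.id))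
          ((hfd (P z)).comp (⟨P z, hPr z⟩ : LinearMap.ker (A - LinearMap.id))
            (LinearMap.ker (A - LinearMap.id)).subtypeL.hasFDerivAt)
      have h2 : (fun x : LinearMap.ker (A - LinearMap.id) =>
          LinearMap.toContinuousLinearMap
            (P.codRestrict (LinearMap.ker (A - LinearMap.id)) hPr)
            (g ((LinearMap.ker (A - LinearMap.id)).subtypeL x))) = f :=
        funext fun x => (hfdef x).symm
      rw [h2] at h1
      exact h1
    exact hF.fderiv
  have hFmap : ∀ y, Fmap (LinearMap.ker (A - LinearMap.id)) P hPr f z y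
      = P (fderiv ℝ g (P z) (P y)) := by
    intro y
    simp only [Fmap, LinearMap.comp_apply, ContinuousLinearMap.coe_coe]
    rw [hfder]
    rfl
  refine ⟨?_, ?_⟩
  · -- first claim: membership in ker (A + I)
    have hPw : P (g z - (f ⟨P z, hPr z⟩ : V)) = 0 := by
      rw [map_sub, step1, hgPz, hPp _ (f ⟨P z, hPr z⟩).2, sub_self]
    rw [LinearMap.mem_ker, LinearMap.add_apply, LinearMap.id_apply, hAP, hPw]
    abel
  · -- second claim
    intro Fdag hFdag
    set w : V := g z - (f ⟨P z, hPr z⟩ : V) with hw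
    have hw1 : w = g z - P (g z) := by rw [hw, step1, hgPz]
    have hPw : P w = 0 := by rw [hw1]; exact hPz0 (g z)
    have hw2 : w = fderiv ℝ g z zm := by rw [hw1, hzm]; exact E2 z
    have hPzm : P zm = 0 := by rw [hzm]; exact hPz0 z
    have key : ∀ y, Ω (Fdag w - (z - P z)) y = 0 := by
      intro y
      have h1 := hFdag w y
      rw [hFmap y] at h1
      have hu' : P (P y) = P y := hPP y
      have e1 : Ω w (P (fderiv ℝ g (P z) (P y))) = Ω w (fderiv ℝ g (P z) (P y)) :=
        (hpairP w _ hPw).symm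
      have e2 : Ω w (fderiv ℝ g (P z) (P y)) = Ω w (fderiv ℝ g z (P y)) := by
        rw [hpairP w (fderiv ℝ g (P z) (P y)) hPw, ← step2 (P y) hu',
          ← hpairP w (fderiv ℝ g z (P y)) hPw]
      have e3 : Ω w (fderiv ℝ g z (P y)) = Ω zm (P y) := by
        rw [hw2]; exact sympl z zm (P y)
      have e4 : Ω zm y = Ω zm (P y) := hpairP zm y hPzm
      rw [map_sub, LinearMap.sub_apply, h1, e1, e2, e3, ← hzm, e4, sub_self]
    have h := hΩnd _ key
    rw [sub_eq_zero] at h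
    exact h
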